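/- For the Grushin inversion x_i = x̃_i d(z̃,0)^{-2}, y_j = ỹ_j d(z̃,0)^{-2-2γ}, the Jacobian entries satisfy, for each fixed i: Σ_{k=1}^N (∂x_i/∂x̃_k)² + |x̃|^{2γ} Σ_{h=1}^l (∂x_i/∂ỹ_h)² = d(z̃,0)^{-4}. -/

import Mathlib

open MeasureTheory Real

noncomputable section

variable {N l : ℕ}

/-- squared Euclidean norm -/
def nsq {n : ℕ} (x : Fin n → ℝ) : ℝ := ∑ i, x i ^ 2

/-- partial derivative in the `i`-th `x` direction -/
def pdx (u : (Fin N → ℝ) × (Fin l → ℝ) → ℝ) (i : Fin N)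
    (z : (Fin N → ℝ) × (Fin l → ℝ)) : ℝ :=
  deriv (fun t => u (Function.update z.1 i t, z.2)) (z.1 i)

/-- partial derivative in the `j`-th `y` direction -/
def pdy (u : (Fin N → ℝ) × (Fin l → ℝ) → ℝ) (j : Fin l)
    (z : (Fin N → ℝ) × (Fin l → ℝ)) : ℝ :=
  deriv (fun t => u (z.1, Function.update z.2 j t)) (z.2 j)

/-- Grushin operator `Δ_γ u = Δ_x u + |x|^{2γ} Δ_y u` -/
def grushinLap (γ : ℝ) (u : (Fin N → ℝ) × (Fin l → ℝ) → ℝ)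
    (z : (Fin N → ℝ) × (Fin l → ℝ)) : ℝ :=
  (∑ i, pdx (pdx u i) i z) + (nsq z.1) ^ γ * ∑ j, pdy (pdy u j) j z

/-- the Grushin distance to the origin:
`d(z,0) = ((1/(1+γ)²)|x|^{2+2γ} + |y|²)^{1/(2+2γ)}` (note `|x|^{2+2γ} = (nsq x)^{1+γ}`). -/
def gd (γ : ℝ) (z : (Fin N → ℝ) × (Fin l → ℝ)) : ℝ :=
  ((1 / (1 + γ) ^ 2) * (nsq z.1) ^ (1 + γ) + nsq z.2) ^ (1 / (2 + 2 * γ))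

/-- the Grushin inversion `x̃ = x/d², ỹ = y/d^{2+2γ}` -/
def ginv (γ : ℝ) (z : (Fin N → ℝ) × (Fin l → ℝ)) : (Fin N → ℝ) × (Fin l → ℝ) :=
  (fun i => z.1 i / gd γ z ^ 2, fun j => z.2 j / gd γ z ^ (2 + 2 * γ))

/-- divergence of a vector field on `ℝ^N × ℝ^l` -/
def gdiv (X : (Fin N → ℝ) × (Fin l → ℝ) → (Fin N → ℝ) × (Fin l → ℝ))
    (z : (Fin N → ℝ) × (Fin l → ℝ)) : ℝ :=
  (∑ i, pdx (fun w => (X w).1 i) i z) + ∑ j, pdy (fun w => (X w).2 j) j z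

/-- Euclidean dot product on `ℝ^N × ℝ^l` -/
def gdot (v w : (Fin N → ℝ) × (Fin l → ℝ)) : ℝ :=
  (∑ i, v.1 i * w.1 i) + ∑ j, v.2 j * w.2 j

lemma nsq_nonneg {n : ℕ} (x : Fin n → ℝ) : 0 ≤ nsq x :=
  Finset.sum_nonneg fun i _ => sq_nonneg (x i)

lemma nsq_pos {n : ℕ} {x : Fin n → ℝ} (hx : x ≠ 0) : 0 < nsq x := by
  obtain ⟨j, hj⟩ : ∃ j, x j ≠ 0 := by
    by_contra h
    push_neg at h
    exact hx (funext h)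
  exact Finset.sum_pos' (fun i _ => sq_nonneg (x i))
    ⟨j, Finset.mem_univ j, by positivity⟩

lemma nsq_update {n : ℕ} (x : Fin n → ℝ) (k : Fin n) (t : ℝ) :
    nsq (Function.update x k t) = nsq x - x k ^ 2 + t ^ 2 := by
  unfold nsq
  have h1 : ∀ j, Function.update x k t j ^ 2
      = Function.update (fun j => x j ^ 2) k (t ^ 2) j := by
    intro j
    by_cases h : j = k
    · subst h; simp
    · simp [Function.update_of_ne h]
  rw [Finset.sum_congr rfl fun j _ => h1 j,
    Finset.sum_update_of_mem (Finset.mem_univ k),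
    ← Finset.add_sum_erase _ _ (Finset.mem_univ k), Finset.erase_eq]
  ring

/-- for the Grushin inversion `x_i = x̃_i d(z̃,0)^{-2}`,
`Σ_k (∂x_i/∂x̃_k)² + |x̃|^{2γ} Σ_h (∂x_i/∂ỹ_h)² = d(z̃,0)^{-4}`. -/
theorem ginv_jacobian_x_diag (γ : ℝ) (hγ : 0 ≤ γ)
    (z : (Fin N → ℝ) × (Fin l → ℝ)) (hx : z.1 ≠ 0) (i : Fin N) :
    (∑ k, pdx (fun w => (ginv γ w).1 i) k z ^ 2)
        + (nsq z.1) ^ γ * ∑ h, pdy (fun w => (ginv γ w).1 i) h z ^ 2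
      = gd γ z ^ (-4 : ℝ) := by
  have hγ1 : (0:ℝ) < 1 + γ := by linarith
  have h1γ : (1:ℝ) + γ ≠ 0 := by linarith
  have h2γ : (2:ℝ) + 2 * γ ≠ 0 := by linarith
  set Q := nsq z.1 with hQdef
  set R := nsq z.2 with hRdef
  have hQ : 0 < Q := nsq_pos hx
  have hR : 0 ≤ R := nsq_nonneg z.2
  set m : ℝ := (1 + γ)⁻¹ with hm
  set S : ℝ := 1 / (1 + γ) ^ 2 * Q ^ (1 + γ) + R with hSdef
  have hS : 0 < S := by
    have h1 : 0 < Q ^ (1 + γ) := Real.rpow_pos_of_pos hQ _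
    have h2 : (0:ℝ) < 1 / (1 + γ) ^ 2 := by positivity
    have := mul_pos h2 h1
    rw [hSdef]; linarith
  set a : ℝ := S ^ (-m - 1 : ℝ) with ha
  have haS : S ^ (-m : ℝ) = a * S := by
    rw [show (-m : ℝ) = (-m - 1) + 1 by ring, Real.rpow_add_one hS.ne', ha]
  -- the inversion written multiplicatively
  have hfun : ∀ (p : Fin N → ℝ) (q : Fin l → ℝ),
      (ginv γ (p, q)).1 i
        = p i * (1 / (1 + γ) ^ 2 * (nsq p) ^ (1 + γ) + nsq q) ^ (-m : ℝ) := by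
    intro p q
    have hb : (0:ℝ) ≤ 1 / (1 + γ) ^ 2 * (nsq p) ^ (1 + γ) + nsq q := by
      have h1 := Real.rpow_nonneg (nsq_nonneg p) (1 + γ)
      have h2 := nsq_nonneg q
      positivity
    have hexp2 : (1 / (2 + 2 * γ)) * ((2:ℕ):ℝ) = m := by
      push_cast; rw [hm]; field_simp
    simp only [ginv, gd]
    rw [← Real.rpow_natCast ((1 / (1 + γ) ^ 2 * (nsq p) ^ (1 + γ) + nsq q)
        ^ (1 / (2 + 2 * γ))) 2, ← Real.rpow_mul hb, hexp2, Real.rpow_neg hb,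
      div_eq_mul_inv]
  -- the x-direction partial derivatives
  have key_x : ∀ k, pdx (fun w => (ginv γ w).1 i) k z
      = (if i = k then 1 else 0) * (a * S)
          - 2 * m ^ 2 * Q ^ γ * z.1 i * z.1 k * a := by
    intro k
    have hfun2 : (fun t => (ginv γ (Function.update z.1 k t, z.2)).1 i)
        = fun t => (Function.update z.1 k t i)
            * (1 / (1 + γ) ^ 2 * (Q - z.1 k ^ 2 + t ^ 2) ^ (1 + γ) + R)
              ^ (-m : ℝ) := by
      funext t
      rw [hfun (Function.update z.1 k t) z.2, nsq_update, ← hQdef, ← hRdef]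
    have hval : Q - z.1 k ^ 2 + z.1 k ^ 2 = Q := by ring
    have hpow : HasDerivAt (fun t : ℝ => t ^ 2) (2 * z.1 k) (z.1 k) := by
      simpa using hasDerivAt_pow 2 (z.1 k)
    have h1 : HasDerivAt (fun t : ℝ => Q - z.1 k ^ 2 + t ^ 2)
        (2 * z.1 k) (z.1 k) := hpow.const_add _
    have h3 := h1.rpow_const (p := 1 + γ) (Or.inl (by rw [hval]; exact hQ.ne'))
    have h4 := (h3.const_mul (1 / (1 + γ) ^ 2)).add_const R
    have hSval : 1 / (1 + γ) ^ 2 * (Q - z.1 k ^ 2 + z.1 k ^ 2) ^ (1 + γ) + R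
        = S := by rw [hval, hSdef]
    have h6 := h4.rpow_const (p := -m) (Or.inl (by rw [hSval]; exact hS.ne'))
    have h7 : HasDerivAt (fun t => Function.update z.1 k t i)
        (if i = k then 1 else 0) (z.1 k) := by
      by_cases h : i = k
      · subst h
        simp only [Function.update_self, if_pos rfl]
        exact hasDerivAt_id _
      · simp only [Function.update_of_ne h, if_neg h]
        exact hasDerivAt_const _ _
    have hupd : Function.update z.1 k (z.1 k) i = z.1 i := by
      by_cases h : i = k
      · subst h; simp
      · simp [Function.update_of_ne h]
    have h9 : HasDerivAt (fun t => (ginv γ (Function.update z.1 k t, z.2)).1 i)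
        ((if i = k then 1 else 0) * (a * S)
          - 2 * m ^ 2 * Q ^ γ * z.1 i * z.1 k * a) (z.1 k) := by
      have hc : 1 / (1 + γ) ^ 2 * (2 * z.1 k * (1 + γ) * Q ^ γ) * -m
          = -(2 * m ^ 2 * Q ^ γ * z.1 k) := by
        rw [hm]; field_simp
      rw [hfun2]
      refine (h7.mul h6).congr_deriv ?_
      rw [hval, hupd, show (1:ℝ) + γ - 1 = γ by ring, ← hSdef, haS, hc, ← ha]
      ring
    exact h9.deriv
  -- the y-direction partial derivatives
  have key_y : ∀ h, pdy (fun w => (ginv γ w).1 i) h z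
      = -(2 * m) * z.1 i * z.2 h * a := by
    intro h
    have hfun2y : (fun t => (ginv γ (z.1, Function.update z.2 h t)).1 i)
        = fun t => z.1 i
            * (1 / (1 + γ) ^ 2 * Q ^ (1 + γ) + (R - z.2 h ^ 2 + t ^ 2))
              ^ (-m : ℝ) := by
      funext t
      rw [hfun z.1 (Function.update z.2 h t), nsq_update, ← hQdef, ← hRdef]
    have hvaly : R - z.2 h ^ 2 + z.2 h ^ 2 = R := by ring
    have h1y : HasDerivAt
        (fun t : ℝ => 1 / (1 + γ) ^ 2 * Q ^ (1 + γ) + (R - z.2 h ^ 2 + t ^ 2))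
        (2 * z.2 h) (z.2 h) := by
      have hpow : HasDerivAt (fun t : ℝ => t ^ 2) (2 * z.2 h) (z.2 h) := by
        simpa using hasDerivAt_pow 2 (z.2 h)
      exact (hpow.const_add _).const_add _
    have hSvaly : 1 / (1 + γ) ^ 2 * Q ^ (1 + γ) + (R - z.2 h ^ 2 + z.2 h ^ 2)
        = S := by rw [hvaly, hSdef]
    have h6y := h1y.rpow_const (p := -m) (Or.inl (by rw [hSvaly]; exact hS.ne'))
    have h9y : HasDerivAt (fun t => (ginv γ (z.1, Function.update z.2 h t)).1 i)
        (-(2 * m) * z.1 i * z.2 h * a) (z.2 h) := by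
      rw [hfun2y]
      refine (h6y.const_mul (z.1 i)).congr_deriv ?_
      rw [hSvaly, ← ha]
      ring
    exact h9y.deriv
  -- assemble
  have hQsum : ∑ k, z.1 k ^ 2 = Q := by rw [hQdef]; rfl
  have hRsum : ∑ h, z.2 h ^ 2 = R := by rw [hRdef]; rfl
  simp only [key_x, key_y]
  have hsum1 : ∑ k, ((if i = k then 1 else 0) * (a * S)
        - 2 * m ^ 2 * Q ^ γ * z.1 i * z.1 k * a) ^ 2
      = (a * S) ^ 2 - 2 * (a * S) * (2 * m ^ 2 * Q ^ γ * z.1 i * a) * z.1 i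
          + (2 * m ^ 2 * Q ^ γ * z.1 i * a) ^ 2 * Q := by
    have hterm : ∀ k : Fin N, ((if i = k then 1 else 0) * (a * S)
          - 2 * m ^ 2 * Q ^ γ * z.1 i * z.1 k * a) ^ 2
        = (if i = k then (a * S) ^ 2
              - 2 * (a * S) * (2 * m ^ 2 * Q ^ γ * z.1 i * a) * z.1 k else 0)
            + (2 * m ^ 2 * Q ^ γ * z.1 i * a) ^ 2 * z.1 k ^ 2 := by
      intro k
      by_cases h : i = k
      · subst h; simp only [eq_self_iff_true, if_true]; ring
      · simp only [if_neg h]; ring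
    rw [Finset.sum_congr rfl fun k _ => hterm k, Finset.sum_add_distrib,
      Finset.sum_ite_eq, ← Finset.mul_sum, hQsum]
    simp only [Finset.mem_univ, if_true]
  have hsum2 : ∑ h, (-(2 * m) * z.1 i * z.2 h * a) ^ 2
      = (2 * m * z.1 i * a) ^ 2 * R := by
    have hterm : ∀ h : Fin l, (-(2 * m) * z.1 i * z.2 h * a) ^ 2
        = (2 * m * z.1 i * a) ^ 2 * z.2 h ^ 2 := fun h => by ring
    rw [Finset.sum_congr rfl fun h _ => hterm h, ← Finset.mul_sum, hRsum]
  have hgd4 : gd γ z ^ (-4 : ℝ) = (a * S) ^ 2 := by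
    have hexp : (1 / (2 + 2 * γ)) * (-4 : ℝ) = -m + -m := by
      rw [hm]; field_simp; ring
    simp only [gd]
    rw [← hQdef, ← hRdef, ← hSdef, ← Real.rpow_mul hS.le, hexp,
      Real.rpow_add hS, haS]
    ring
  have hSrel : S = m ^ 2 * (Q ^ γ * Q) + R := by
    rw [hSdef, show (1:ℝ) + γ = γ + 1 by ring, Real.rpow_add hQ, Real.rpow_one,
      hm]
    field_simp
    ring
  rw [hsum1, hsum2, hgd4]
  linear_combination (-(4 * m ^ 2 * Q ^ γ * (z.1 i) ^ 2 * a ^ 2)) * hSrel
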